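/- Let n > 1 be an odd integer and r ≥ 1. Then both the sum over k from 0 to (n^r-1)/2 and the sum over k from 0 to n^r - 1 of [4k+1]_q (q;q^2)_k^4 / (q^2;q^2)_k^4 are congruent to 0 modulo [n^r]_q. -/

import Mathlib

open Finset Polynomial
noncomputable section

/-- numerator "odd" product `(q;q²)_k` -/
def Pq (k : ℕ) : Polynomial ℚ := ∏ j ∈ range k, (1 - X^(2*j+1))
def Qq (k : ℕ) : Polynomial ℚ := ∏ j ∈ range k, (1 - X^(2*j+2))
def Bq (j : ℕ) : Polynomial ℚ := ∑ i ∈ range j, X^i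

/-- the k-th term of the sum, as a rational function -/
def Tk (k : ℕ) : RatFunc ℚ :=
  algebraMap _ _ (Bq (4*k+1)) * algebraMap _ _ (Pq k)^4 / algebraMap _ _ (Qq k)^4

/-- `x` is regular at ζ with value `v`. -/
def HasVal (ζ : ℂ) (x : RatFunc ℚ) (v : ℂ) : Prop :=
  ∃ p w : Polynomial ℚ, aeval ζ w ≠ 0 ∧ x * algebraMap _ _ w = algebraMap _ _ p ∧
    aeval ζ p = v * aeval ζ w

theorem HasVal.add {ζ : ℂ} {x y : RatFunc ℚ} {v u : ℂ} (hx : HasVal ζ x v)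
    (hy : HasVal ζ y u) : HasVal ζ (x + y) (v + u) := by
  obtain ⟨p, w, hw, hxw, hp⟩ := hx
  obtain ⟨p', w', hw', hxw', hp'⟩ := hy
  refine ⟨p * w' + p' * w, w * w', by simp [hw, hw'], ?_, by rw [map_add, map_mul, map_mul, hp, hp', map_mul]; ring⟩
  push_cast [map_add, map_mul]
  calc (x + y) * (algebraMap _ _ w * algebraMap _ _ w')
      = (x * algebraMap _ _ w) * algebraMap _ _ w' + (y * algebraMap _ _ w') * algebraMap _ _ w := by ring
    _ = _ := by rw [hxw, hxw']

theorem hasVal_sum {ζ : ℂ} {K : ℕ} {f : ℕ → RatFunc ℚ} {v : ℕ → ℂ}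
    (h : ∀ k < K, HasVal ζ (f k) (v k)) :
    HasVal ζ (∑ k ∈ range K, f k) (∑ k ∈ range K, v k) := by
  induction K with
  | zero =>
    rw [Finset.sum_range_zero, Finset.sum_range_zero]
    exact ⟨0, 1, by simp, by simp, by simp⟩
  | succ K ih =>
    rw [Finset.sum_range_succ, Finset.sum_range_succ]
    exact (ih fun k hk => h k (by omega)).add (h K (by omega))

theorem hasVal_quot {ζ : ℂ} {A W : Polynomial ℚ} (hW : aeval ζ W ≠ 0) :
    HasVal ζ (algebraMap _ _ A / algebraMap _ _ W) (aeval ζ A / aeval ζ W) :=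
  ⟨A, W, hW, by
    rw [div_mul_cancel₀]
    exact fun h => hW (by rw [show W = 0 from (map_eq_zero_iff _ (RatFunc.algebraMap_injective ℚ)).mp h]; simp), by
    field_simp⟩

/-! ### ℂ-side values -/

def Pz (ζ : ℂ) (s : ℕ) : ℂ := ∏ i ∈ range s, (1 - ζ^(2*i+1))
def Qz (ζ : ℂ) (s : ℕ) : ℂ := ∏ i ∈ range s, (1 - ζ^(2*i+2))
def Bz (ζ : ℂ) (j : ℕ) : ℂ := ∑ i ∈ range j, ζ^i
def tval (ζ : ℂ) (s : ℕ) : ℂ := Bz ζ (4*s+1) * (Pz ζ s)^4 / (Qz ζ s)^4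

theorem Pz_succ (ζ : ℂ) (s : ℕ) : Pz ζ (s+1) = Pz ζ s * (1 - ζ^(2*s+1)) := by
  simp only [Pz, Finset.prod_range_succ]

theorem Qz_succ (ζ : ℂ) (s : ℕ) : Qz ζ (s+1) = Qz ζ s * (1 - ζ^(2*s+2)) := by
  simp only [Qz, Finset.prod_range_succ]

section Pairing

variable {d m : ℕ} {ζ : ℂ}

theorem zpow_d (hζ : IsPrimitiveRoot ζ d) : ζ^d = 1 := hζ.pow_eq_one

theorem zmod (hζ : IsPrimitiveRoot ζ d) (hd0 : 0 < d) {a b : ℕ} (h : a % d = b % d) :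
    ζ^a = ζ^b := by
  conv_lhs => rw [← Nat.mod_add_div a d, pow_add, pow_mul, zpow_d hζ, one_pow, mul_one]
  conv_rhs => rw [← Nat.mod_add_div b d, pow_add, pow_mul, zpow_d hζ, one_pow, mul_one]
  rw [h]

theorem zpow_ne_one (hζ : IsPrimitiveRoot ζ d) {u : ℕ} (h0 : 0 < u) (h1 : u < d) :
    ζ^u ≠ 1 := fun h => by
  have := Nat.le_of_dvd h0 ((hζ.pow_eq_one_iff_dvd u).mp h)
  omega

theorem zflip (hζ : IsPrimitiveRoot ζ d) {u : ℕ} (hu : u ≤ d) :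
    (1 - ζ^(d-u)) = -ζ^(d-u) * (1 - ζ^u) := by
  have h : ζ^(d-u) * ζ^u = 1 := by rw [← pow_add, show d - u + u = d from by omega, zpow_d hζ]
  ring_nf
  linear_combination -h

variable (hd : d = 2*m+1) (hm : 0 < m) (hζ : IsPrimitiveRoot ζ d)
include hd hm hζ

theorem zne0 : ζ ≠ 0 := hζ.ne_zero (by omega)

theorem Pz_ne (s : ℕ) (hs : s ≤ m) : Pz ζ s ≠ 0 := by
  rw [Pz, Finset.prod_ne_zero_iff]
  intro i hi
  rw [Finset.mem_range] at hi
  exact sub_ne_zero.mpr fun h => zpow_ne_one hζ (by omega) (by omega) h.symm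

theorem Qz_ne (s : ℕ) (hs : s ≤ m) : Qz ζ s ≠ 0 := by
  rw [Qz, Finset.prod_ne_zero_iff]
  intro i hi
  rw [Finset.mem_range] at hi
  exact sub_ne_zero.mpr fun h => zpow_ne_one hζ (by omega) (by omega) h.symm

omit hd hm hζ in
theorem Bz_geom (j : ℕ) : (1 - ζ) * Bz ζ j = 1 - ζ^j := by
  have := geom_sum_mul ζ j
  rw [Bz]
  linear_combination -this

end Pairing

section Pairing2

variable {d m : ℕ} {ζ : ℂ}
variable (hd : d = 2*m+1) (hm : 0 < m) (hζ : IsPrimitiveRoot ζ d)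
include hd hm hζ

theorem L1 : ∀ s ≤ m, Pz ζ m * ((-1)^s * ζ^(s*(s+1))) = Pz ζ (m-s) * Qz ζ s := by
  intro s
  induction s with
  | zero => intro _; simp [Qz]
  | succ s ih =>
    intro hs
    have IH := ih (by omega)
    have hsplit : Pz ζ (m-s) = Pz ζ (m-(s+1)) * (1 - ζ^(d-(2*s+2))) := by
      rw [show m - s = (m-(s+1)) + 1 from by omega, Pz_succ,
        show 2*(m-(s+1))+1 = d - (2*s+2) from by omega]
    have happ : (1 - ζ^(d-(2*s+2))) = -ζ^(d-(2*s+2)) * (1 - ζ^(2*s+2)) :=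
      zflip hζ (by omega)
    have hc : (-ζ^(d-(2*s+2)) : ℂ) ≠ 0 :=
      neg_ne_zero.mpr (pow_ne_zero _ (zne0 hd hm hζ))
    apply mul_right_cancel₀ hc
    have hexp : (s+1)*(s+2) + (d-(2*s+2)) = s*(s+1) + d := by
      zify [show 2*s+2 ≤ d from by omega]; ring
    calc Pz ζ m * ((-1)^(s+1) * ζ^((s+1)*(s+2))) * (-ζ^(d-(2*s+2)))
        = Pz ζ m * ((-1)^s * (ζ^((s+1)*(s+2)) * ζ^(d-(2*s+2)))) := by ring
      _ = Pz ζ m * ((-1)^s * ζ^(s*(s+1))) := by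
          rw [← pow_add, hexp, pow_add, zpow_d hζ, mul_one]
      _ = Pz ζ (m-s) * Qz ζ s := IH
      _ = Pz ζ (m-(s+1)) * (-ζ^(d-(2*s+2)) * (1 - ζ^(2*s+2))) * Qz ζ s := by
          rw [hsplit, happ]
      _ = Pz ζ (m-(s+1)) * (Qz ζ s * (1 - ζ^(2*s+2))) * (-ζ^(d-(2*s+2))) := by ring
      _ = Pz ζ (m-(s+1)) * Qz ζ (s+1) * (-ζ^(d-(2*s+2))) := by
          rw [Qz_succ]

theorem L2 : ∀ s ≤ m, Qz ζ m * ((-1)^s * ζ^(s*s)) = Qz ζ (m-s) * Pz ζ s := by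
  intro s
  induction s with
  | zero => intro _; simp [Pz]
  | succ s ih =>
    intro hs
    have IH := ih (by omega)
    have hsplit : Qz ζ (m-s) = Qz ζ (m-(s+1)) * (1 - ζ^(d-(2*s+1))) := by
      rw [show m - s = (m-(s+1)) + 1 from by omega, Qz_succ,
        show 2*(m-(s+1))+2 = d - (2*s+1) from by omega]
    have happ : (1 - ζ^(d-(2*s+1))) = -ζ^(d-(2*s+1)) * (1 - ζ^(2*s+1)) :=
      zflip hζ (by omega)
    have hc : (-ζ^(d-(2*s+1)) : ℂ) ≠ 0 :=
      neg_ne_zero.mpr (pow_ne_zero _ (zne0 hd hm hζ))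
    apply mul_right_cancel₀ hc
    have hexp : (s+1)*(s+1) + (d-(2*s+1)) = s*s + d := by
      zify [show 2*s+1 ≤ d from by omega]; ring
    calc Qz ζ m * ((-1)^(s+1) * ζ^((s+1)*(s+1))) * (-ζ^(d-(2*s+1)))
        = Qz ζ m * ((-1)^s * (ζ^((s+1)*(s+1)) * ζ^(d-(2*s+1)))) := by ring
      _ = Qz ζ m * ((-1)^s * ζ^(s*s)) := by
          rw [← pow_add, hexp, pow_add, zpow_d hζ, mul_one]
      _ = Qz ζ (m-s) * Pz ζ s := IH
      _ = Qz ζ (m-(s+1)) * (-ζ^(d-(2*s+1)) * (1 - ζ^(2*s+1))) * Pz ζ s := by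
          rw [hsplit, happ]
      _ = Qz ζ (m-(s+1)) * (Pz ζ s * (1 - ζ^(2*s+1))) * (-ζ^(d-(2*s+1))) := by ring
      _ = Qz ζ (m-(s+1)) * Pz ζ (s+1) * (-ζ^(d-(2*s+1))) := by
          rw [Pz_succ]

theorem e4 : (Pz ζ m)^4 = ζ * (Qz ζ m)^4 := by
  have h := L2 hd hm hζ m le_rfl
  rw [Nat.sub_self] at h
  have h0 : Qz ζ 0 = 1 := by simp [Qz]
  rw [h0, one_mul] at h
  have h4 := congrArg (fun x : ℂ => x^4) h.symm
  simp only [mul_pow, ← pow_mul] at h4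
  have hneg : ((-1 : ℂ))^(m*4) = 1 := Even.neg_one_pow ⟨m*2, by ring⟩
  rw [hneg] at h4
  have hmm : ζ^(m*m*4) = ζ := by
    have hdz : (d:ℤ) = 2*m+1 := by exact_mod_cast hd
    have he : m*m*4 = (d-2)*d + 1 := by
      zify [show 2 ≤ d from by omega]
      linear_combination (-(d:ℤ)-2*m+1) * hdz
    rw [he, pow_add, pow_one, mul_comm (d-2) d, pow_mul, zpow_d hζ, one_pow, one_mul]
  calc (Pz ζ m)^4 = Qz ζ m ^4 * (1 * ζ^(m*m*4)) := h4
    _ = ζ * (Qz ζ m)^4 := by rw [hmm]; ring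

theorem eB (s : ℕ) (hs : s ≤ m) :
    Bz ζ (4*(m-s)+1) * ζ^(4*s+1) = - Bz ζ (4*s+1) := by
  have hone : (1 - ζ) ≠ 0 := sub_ne_zero.mpr (hζ.ne_one (by omega)).symm
  apply mul_left_cancel₀ hone
  have h2d : ζ^((4*(m-s)+1) + (4*s+1)) = 1 := by
    rw [show (4*(m-s)+1) + (4*s+1) = d * 2 from by omega, pow_mul, zpow_d hζ, one_pow]
  calc (1-ζ) * (Bz ζ (4*(m-s)+1) * ζ^(4*s+1))
      = ((1-ζ) * Bz ζ (4*(m-s)+1)) * ζ^(4*s+1) := by ring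
    _ = (1 - ζ^(4*(m-s)+1)) * ζ^(4*s+1) := by rw [Bz_geom]
    _ = ζ^(4*s+1) - ζ^((4*(m-s)+1) + (4*s+1)) := by rw [pow_add]; ring
    _ = ζ^(4*s+1) - 1 := by rw [h2d]
    _ = (1-ζ) * (- Bz ζ (4*s+1)) := by rw [show (1-ζ) * (- Bz ζ (4*s+1)) = -((1-ζ) * Bz ζ (4*s+1)) from by ring, Bz_geom]; ring

end Pairing2

section Pairing3

variable {d m : ℕ} {ζ : ℂ}
variable (hd : d = 2*m+1) (hm : 0 < m) (hζ : IsPrimitiveRoot ζ d)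
include hd hm hζ

theorem t_pair (s : ℕ) (hs : s ≤ m) : tval ζ (m-s) = - tval ζ s := by
  have hPs := Pz_ne hd hm hζ s hs
  have hQs := Qz_ne hd hm hζ s hs
  have hPm := Pz_ne hd hm hζ m le_rfl
  have hQm := Qz_ne hd hm hζ m le_rfl
  have hQms := Qz_ne hd hm hζ (m-s) (by omega)
  have hz0 := zne0 hd hm hζ
  have h14 : (Pz ζ (m-s))^4 * (Qz ζ s)^4 = (Pz ζ m)^4 * ζ^(4*(s*(s+1))) := by
    have := congrArg (fun x : ℂ => x^4) (L1 hd hm hζ s hs)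
    simp only [mul_pow, ← pow_mul] at this
    rw [show (-1 : ℂ)^(s*4) = 1 from Even.neg_one_pow ⟨s*2, by ring⟩, one_mul] at this
    rw [← this, mul_comm (s*(s+1)) 4]
  have h24 : (Qz ζ (m-s))^4 * (Pz ζ s)^4 = (Qz ζ m)^4 * ζ^(4*(s*s)) := by
    have := congrArg (fun x : ℂ => x^4) (L2 hd hm hζ s hs)
    simp only [mul_pow, ← pow_mul] at this
    rw [show (-1 : ℂ)^(s*4) = 1 from Even.neg_one_pow ⟨s*2, by ring⟩, one_mul] at this
    rw [← this, mul_comm (s*s) 4]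
  have heB := eB hd hm hζ s hs
  have he4 := e4 hd hm hζ
  rw [tval, tval, ← neg_div, ← neg_mul,
    div_eq_div_iff (pow_ne_zero 4 hQms) (pow_ne_zero 4 hQs)]
  apply mul_right_cancel₀ (mul_ne_zero (pow_ne_zero (4*s+1) hz0) (pow_ne_zero 4 hPs))
  calc Bz ζ (4*(m-s)+1) * Pz ζ (m-s)^4 * Qz ζ s^4 * (ζ^(4*s+1) * Pz ζ s^4)
      = (Bz ζ (4*(m-s)+1) * ζ^(4*s+1)) * (Pz ζ (m-s)^4 * Qz ζ s^4) * Pz ζ s^4 := by ring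
    _ = (- Bz ζ (4*s+1)) * (Pz ζ m^4 * ζ^(4*(s*(s+1)))) * Pz ζ s^4 := by rw [heB, h14]
    _ = (- Bz ζ (4*s+1)) * ((ζ * Qz ζ m^4) * ζ^(4*(s*(s+1)))) * Pz ζ s^4 := by rw [he4]
    _ = (- Bz ζ (4*s+1)) * Qz ζ m^4 * Pz ζ s^4 * (ζ^(1 + 4*(s*(s+1)))) := by
        rw [pow_add, pow_one]; ring
    _ = (- Bz ζ (4*s+1)) * Qz ζ m^4 * Pz ζ s^4 * (ζ^(4*(s*s) + (4*s+1))) := by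
        rw [show 1 + 4*(s*(s+1)) = 4*(s*s) + (4*s+1) from by ring]
    _ = (- Bz ζ (4*s+1)) * Pz ζ s^4 * (Qz ζ m^4 * ζ^(4*(s*s))) * ζ^(4*s+1) := by
        rw [pow_add]; ring
    _ = (- Bz ζ (4*s+1)) * Pz ζ s^4 * (Qz ζ (m-s)^4 * Pz ζ s^4) * ζ^(4*s+1) := by
        rw [h24]
    _ = -Bz ζ (4*s+1) * Pz ζ s^4 * Qz ζ (m-s)^4 * (ζ^(4*s+1) * Pz ζ s^4) := by ring

theorem tvalsum_zero : ∑ s ∈ range (m+1), tval ζ s = 0 := by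
  have hrefl := Finset.sum_range_reflect (fun s => tval ζ s) (m+1)
  have h1 : ∑ j ∈ range (m+1), tval ζ (m+1-1-j) = ∑ j ∈ range (m+1), (- tval ζ j) := by
    apply Finset.sum_congr rfl
    intro j hj
    rw [Finset.mem_range] at hj
    rw [show m+1-1-j = m - j from by omega]
    exact t_pair hd hm hζ j (by omega)
  rw [h1] at hrefl
  rw [Finset.sum_neg_distrib] at hrefl
  have h2 : (2:ℂ) * (∑ s ∈ range (m+1), tval ζ s) = 0 := by linear_combination -hrefl
  exact (mul_eq_zero.mp h2).resolve_left two_ne_zero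

end Pairing3

section Blocks

theorem alg_cancel (c x y : Polynomial ℚ) (hc : c ≠ 0) :
    algebraMap (Polynomial ℚ) (RatFunc ℚ) (c*x) / algebraMap (Polynomial ℚ) (RatFunc ℚ) (c*y)
      = algebraMap (Polynomial ℚ) (RatFunc ℚ) x / algebraMap (Polynomial ℚ) (RatFunc ℚ) y := by
  rw [map_mul, map_mul, mul_div_mul_left _ _ (RatFunc.algebraMap_ne_zero hc)]

theorem one_sub_Xd_ne (d : ℕ) (hd0 : 0 < d) : (1 - X^d : Polynomial ℚ) ≠ 0 := by
  intro h
  have := congrArg (Polynomial.eval 0) h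
  simp [zero_pow (by omega : d ≠ 0)] at this

theorem geom_split (d u : ℕ) :
    (1 - X^(u*d) : Polynomial ℚ) = (1 - X^d) * ∑ i ∈ range u, (X^d)^i := by
  have h := geom_sum_mul (X^d : Polynomial ℚ) u
  rw [← pow_mul, mul_comm d u] at h
  linear_combination h

variable {d m : ℕ} {ζ : ℂ}
variable (hd : d = 2*m+1) (hm : 0 < m) (hζ : IsPrimitiveRoot ζ d)
include hd hm hζ

theorem aeval_geom (u : ℕ) : aeval ζ (∑ i ∈ range u, ((X:Polynomial ℚ)^d)^i) = (u:ℂ) := by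
  rw [map_sum]
  simp only [map_pow, aeval_X, zpow_d hζ, one_pow]
  simp

omit hm in
theorem zexp_odd (a i : ℕ) : ζ^(2*(a*d+i)+1) = ζ^(2*i+1) := by
  apply zmod hζ (by omega)
  rw [show 2*(a*d+i)+1 = (2*i+1) + (2*a)*d from by ring, Nat.add_mul_mod_self_right]

omit hm in
theorem zexp_even (a i : ℕ) : ζ^(2*(a*d+i)+2) = ζ^(2*i+2) := by
  apply zmod hζ (by omega)
  rw [show 2*(a*d+i)+2 = (2*i+2) + (2*a)*d from by ring, Nat.add_mul_mod_self_right]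

theorem zodd_ne_one {i : ℕ} (hi : i < d) (him : i ≠ m) : ζ^(2*i+1) ≠ 1 := by
  intro h
  obtain ⟨c, hc⟩ := (hζ.pow_eq_one_iff_dvd _).mp h
  match c with
  | 0 => omega
  | 1 => omega
  | (c+2) =>
    have : d*(c+2) = d*c + 2*d := by ring
    omega

theorem zeven_ne_one {i : ℕ} (hi : i + 1 < d) : ζ^(2*i+2) ≠ 1 := by
  intro h
  obtain ⟨c, hc⟩ := (hζ.pow_eq_one_iff_dvd _).mp h
  rcases Nat.even_or_odd c with ⟨c', rfl⟩ | hodd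
  · have : d*(c'+c') = (d*c') + (d*c') := by ring
    have h2 : i + 1 = d * c' := by omega
    rcases c' with _ | c'
    · omega
    · have : d*(c'+1) = d*c' + d := by ring
      omega
  · exfalso
    have h1 : Even (2*i+2) := ⟨i+1, by ring⟩
    rw [hc] at h1
    have h2 : Odd (d*c) := Odd.mul ⟨m, by omega⟩ hodd
    exact (Nat.not_odd_iff_even.mpr h1) h2

theorem aeval_Rp (a s : ℕ) (hs : s ≤ m) :
    aeval ζ (∏ i ∈ range s, (1 - (X:Polynomial ℚ)^(2*(a*d+i)+1))) = Pz ζ s ∧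
    aeval ζ (∏ i ∈ range s, (1 - (X:Polynomial ℚ)^(2*(a*d+i)+1))) ≠ 0 := by
  constructor
  · rw [map_prod, Pz]
    apply Finset.prod_congr rfl
    intro i hi
    simp only [map_sub, map_one, map_pow, aeval_X]
    rw [zexp_odd hd hζ]
  · rw [map_prod]
    apply Finset.prod_ne_zero_iff.mpr
    intro i hi
    rw [Finset.mem_range] at hi
    simp only [map_sub, map_one, map_pow, aeval_X]
    rw [zexp_odd hd hζ]
    exact sub_ne_zero.mpr fun h => (zodd_ne_one hd hm hζ (by omega) (by omega)) h.symm

theorem aeval_Rq (a s : ℕ) (hs : s < d) :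
    aeval ζ (∏ i ∈ range s, (1 - (X:Polynomial ℚ)^(2*(a*d+i)+2))) = Qz ζ s ∧
    aeval ζ (∏ i ∈ range s, (1 - (X:Polynomial ℚ)^(2*(a*d+i)+2))) ≠ 0 := by
  constructor
  · rw [map_prod, Qz]
    apply Finset.prod_congr rfl
    intro i hi
    simp only [map_sub, map_one, map_pow, aeval_X]
    rw [zexp_even hd hζ]
  · rw [map_prod]
    apply Finset.prod_ne_zero_iff.mpr
    intro i hi
    rw [Finset.mem_range] at hi
    simp only [map_sub, map_one, map_pow, aeval_X]
    rw [zexp_even hd hζ]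
    exact sub_ne_zero.mpr fun h => (zeven_ne_one hd hm hζ (by omega)) h.symm

end Blocks

section Blocks2

variable {d m : ℕ} {ζ : ℂ}
variable (hd : d = 2*m+1) (hm : 0 < m) (hζ : IsPrimitiveRoot ζ d)
include hd hm hζ

theorem blockP (a : ℕ) : ∃ p : Polynomial ℚ,
    Pq (a*d) = (1 - X^d)^a * p ∧ aeval ζ p ≠ 0 := by
  induction a with
  | zero => exact ⟨1, by simp [Pq], by simp⟩
  | succ a ih =>
    obtain ⟨p, hp, hpne⟩ := ih
    have hsplit : Pq ((a+1)*d) = Pq (a*d) * ∏ i ∈ range d, (1 - X^(2*(a*d+i)+1)) := by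
      rw [show (a+1)*d = a*d + d from by ring, Pq, Finset.prod_range_add, ← Pq]
    have hmem : m ∈ range d := Finset.mem_range.mpr (by omega)
    have hblock : ∏ i ∈ range d, (1 - (X:Polynomial ℚ)^(2*(a*d+i)+1))
        = (1 - X^((2*a+1)*d)) * ∏ i ∈ (range d).erase m, (1 - X^(2*(a*d+i)+1)) := by
      rw [← Finset.mul_prod_erase (range d) _ hmem,
        show 2*(a*d+m)+1 = (2*a+1)*d from by rw [hd]; ring]
    refine ⟨p * ((∑ i ∈ range (2*a+1), ((X:Polynomial ℚ)^d)^i) *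
      ∏ i ∈ (range d).erase m, (1 - X^(2*(a*d+i)+1))), ?_, ?_⟩
    · rw [hsplit, hp, hblock, geom_split, pow_succ]
      ring
    · simp only [map_mul]
      refine mul_ne_zero hpne (mul_ne_zero ?_ ?_)
      · rw [aeval_geom hd hm hζ]
        exact Nat.cast_ne_zero.mpr (by omega)
      · rw [map_prod]
        apply Finset.prod_ne_zero_iff.mpr
        intro i hi
        have hi' := Finset.mem_erase.mp hi
        have hir := Finset.mem_range.mp hi'.2
        simp only [map_sub, map_one, map_pow, aeval_X]
        rw [zexp_odd hd hζ]
        exact sub_ne_zero.mpr fun h => (zodd_ne_one hd hm hζ hir hi'.1) h.symm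

theorem blockQ (a : ℕ) : ∃ q : Polynomial ℚ,
    Qq (a*d) = (1 - X^d)^a * q ∧ aeval ζ q ≠ 0 := by
  induction a with
  | zero => exact ⟨1, by simp [Qq], by simp⟩
  | succ a ih =>
    obtain ⟨q, hq, hqne⟩ := ih
    have hsplit : Qq ((a+1)*d) = Qq (a*d) * ∏ i ∈ range d, (1 - X^(2*(a*d+i)+2)) := by
      rw [show (a+1)*d = a*d + d from by ring, Qq, Finset.prod_range_add, ← Qq]
    have hmem : 2*m ∈ range d := Finset.mem_range.mpr (by omega)
    have hblock : ∏ i ∈ range d, (1 - (X:Polynomial ℚ)^(2*(a*d+i)+2))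
        = (1 - X^((2*a+2)*d)) * ∏ i ∈ (range d).erase (2*m), (1 - X^(2*(a*d+i)+2)) := by
      rw [← Finset.mul_prod_erase (range d) _ hmem,
        show 2*(a*d+2*m)+2 = (2*a+2)*d from by rw [hd]; ring]
    refine ⟨q * ((∑ i ∈ range (2*a+2), ((X:Polynomial ℚ)^d)^i) *
      ∏ i ∈ (range d).erase (2*m), (1 - X^(2*(a*d+i)+2))), ?_, ?_⟩
    · rw [hsplit, hq, hblock, geom_split, pow_succ]
      ring
    · simp only [map_mul]
      refine mul_ne_zero hqne (mul_ne_zero ?_ ?_)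
      · rw [aeval_geom hd hm hζ]
        exact Nat.cast_ne_zero.mpr (by omega)
      · rw [map_prod]
        apply Finset.prod_ne_zero_iff.mpr
        intro i hi
        have hi' := Finset.mem_erase.mp hi
        have hir := Finset.mem_range.mp hi'.2
        simp only [map_sub, map_one, map_pow, aeval_X]
        rw [zexp_even hd hζ]
        exact sub_ne_zero.mpr fun h => (zeven_ne_one hd hm hζ (by omega)) h.symm

end Blocks2

theorem HasVal.congr {ζ : ℂ} {x : RatFunc ℚ} {v v' : ℂ} (h : HasVal ζ x v) (e : v = v') :
    HasVal ζ x v' := e ▸ h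

theorem aeval_Bq (ζ : ℂ) (j : ℕ) : aeval ζ (Bq j) = Bz ζ j := by
  rw [Bq, Bz, map_sum]
  simp

section TermVal

variable {d m : ℕ} {ζ : ℂ}
variable (hd : d = 2*m+1) (hm : 0 < m) (hζ : IsPrimitiveRoot ζ d)
include hd hm hζ

theorem Bz_reduce (a s : ℕ) : Bz ζ (4*(a*d+s)+1) = Bz ζ (4*s+1) := by
  have hone : (1 - ζ) ≠ 0 := sub_ne_zero.mpr (hζ.ne_one (by omega)).symm
  apply mul_left_cancel₀ hone
  rw [Bz_geom, Bz_geom, sub_right_inj]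
  apply zmod hζ (by omega)
  rw [show 4*(a*d+s)+1 = (4*s+1) + (4*a)*d from by ring, Nat.add_mul_mod_self_right]

theorem term_val (a : ℕ) : ∃ C : ℂ, ∀ s, s < d →
    HasVal ζ (Tk (a*d+s)) (if s ≤ m then C * tval ζ s else 0) := by
  obtain ⟨pa, hpa, hpane⟩ := blockP hd hm hζ a
  obtain ⟨qa, hqa, hqane⟩ := blockQ hd hm hζ a
  refine ⟨(aeval ζ pa / aeval ζ qa)^4, ?_⟩
  intro s hs
  have hc4 : (((1 - X^d : Polynomial ℚ))^a)^4 ≠ 0 :=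
    pow_ne_zero _ (pow_ne_zero _ (one_sub_Xd_ne d (by omega)))
  have hPk : Pq (a*d+s) = Pq (a*d) * ∏ i ∈ range s, (1 - X^(2*(a*d+i)+1)) := by
    rw [Pq, Finset.prod_range_add, ← Pq]
  have hQk : Qq (a*d+s) = Qq (a*d) * ∏ i ∈ range s, (1 - X^(2*(a*d+i)+2)) := by
    rw [Qq, Finset.prod_range_add, ← Qq]
  have hRq := aeval_Rq hd hm hζ a s hs
  have hdenne : aeval ζ ((qa * ∏ i ∈ range s, (1 - (X:Polynomial ℚ)^(2*(a*d+i)+2)))^4) ≠ 0 := by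
    rw [map_pow, map_mul]
    exact pow_ne_zero _ (mul_ne_zero hqane hRq.2)
  by_cases hsm : s ≤ m
  · have hRp := aeval_Rp hd hm hζ a s hsm
    have key : Tk (a*d+s) = algebraMap (Polynomial ℚ) (RatFunc ℚ)
        ((((1-X^d)^a)^4) * (Bq (4*(a*d+s)+1) *
          (pa * ∏ i ∈ range s, (1 - X^(2*(a*d+i)+1)))^4)) /
        algebraMap (Polynomial ℚ) (RatFunc ℚ)
        ((((1-X^d)^a)^4) * ((qa * ∏ i ∈ range s, (1 - X^(2*(a*d+i)+2)))^4)) := by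
      rw [Tk, hPk, hpa, hQk, hqa]
      simp only [map_mul, map_pow]
      ring
    rw [alg_cancel _ _ _ hc4] at key
    rw [key, if_pos hsm]
    apply (hasVal_quot hdenne).congr
    rw [map_mul, map_pow, map_mul, map_pow, map_mul, aeval_Bq, Bz_reduce hd hm hζ,
      hRp.1, hRq.1, tval]
    have h1 : aeval ζ qa ≠ 0 := hqane
    have h2 : Qz ζ s ≠ 0 := Qz_ne hd hm hζ s hsm
    field_simp
  · have hmem : m ∈ range s := Finset.mem_range.mpr (by omega)
    have hblock : ∏ i ∈ range s, (1 - (X:Polynomial ℚ)^(2*(a*d+i)+1))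
        = ((1 - X^d) * ∑ i ∈ range (2*a+1), ((X:Polynomial ℚ)^d)^i) *
          ∏ i ∈ (range s).erase m, (1 - X^(2*(a*d+i)+1)) := by
      rw [← Finset.mul_prod_erase (range s) _ hmem,
        show 2*(a*d+m)+1 = (2*a+1)*d from by rw [hd]; ring, geom_split]
    have key : Tk (a*d+s) = algebraMap (Polynomial ℚ) (RatFunc ℚ)
        ((((1-X^d)^a)^4) * (Bq (4*(a*d+s)+1) *
          ((1-X^d) * (pa * (∑ i ∈ range (2*a+1), ((X:Polynomial ℚ)^d)^i) *
            ∏ i ∈ (range s).erase m, (1 - X^(2*(a*d+i)+1))))^4)) /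
        algebraMap (Polynomial ℚ) (RatFunc ℚ)
        ((((1-X^d)^a)^4) * ((qa * ∏ i ∈ range s, (1 - X^(2*(a*d+i)+2)))^4)) := by
      rw [Tk, hPk, hpa, hQk, hqa, hblock]
      simp only [map_mul, map_pow]
      ring
    rw [alg_cancel _ _ _ hc4] at key
    rw [key, if_neg hsm]
    apply (hasVal_quot hdenne).congr
    have hz : aeval ζ ((1 - X^d : Polynomial ℚ)) = 0 := by
      simp only [map_sub, map_one, map_pow, aeval_X, zpow_d hζ, sub_self]
    rw [map_mul, map_pow, map_mul, map_pow, map_mul, hz]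
    simp

end TermVal

theorem hasVal_zero (ζ : ℂ) : HasVal ζ (0 : RatFunc ℚ) 0 := ⟨0, 1, by simp, by simp, by simp⟩

section Assembly

variable {d m : ℕ} {ζ : ℂ}
variable (hd : d = 2*m+1) (hm : 0 < m) (hζ : IsPrimitiveRoot ζ d)
include hd hm hζ

theorem halfblock_zero (a : ℕ) : HasVal ζ (∑ s ∈ range (m+1), Tk (a*d+s)) 0 := by
  obtain ⟨C, hC⟩ := term_val hd hm hζ a
  have h := hasVal_sum (ζ := ζ) (K := m+1) (f := fun s => Tk (a*d+s))
    (v := fun s => C * tval ζ s) (fun s hs => by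
      have := hC s (by omega)
      rwa [if_pos (by omega : s ≤ m)] at this)
  exact h.congr (by rw [← Finset.mul_sum, tvalsum_zero hd hm hζ, mul_zero])

theorem block_zero (a : ℕ) : HasVal ζ (∑ s ∈ range d, Tk (a*d+s)) 0 := by
  obtain ⟨C, hC⟩ := term_val hd hm hζ a
  have h := hasVal_sum (ζ := ζ) (K := d) (f := fun s => Tk (a*d+s))
    (v := fun s => if s ≤ m then C * tval ζ s else 0) (fun s hs => hC s hs)
  apply h.congr
  rw [← Finset.sum_subset (Finset.range_subset_range.mpr (by omega : m+1 ≤ d))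
    (fun x _ hx => by rw [if_neg (by simp at hx; omega)])]
  calc ∑ s ∈ range (m+1), (if s ≤ m then C * tval ζ s else 0)
      = ∑ s ∈ range (m+1), C * tval ζ s := by
        apply Finset.sum_congr rfl
        intro s hs
        rw [if_pos (by simp at hs; omega)]
    _ = 0 := by rw [← Finset.mul_sum, tvalsum_zero hd hm hζ, mul_zero]

theorem sum_blocks (A : ℕ) : HasVal ζ (∑ k ∈ range (A*d), Tk k) 0 := by
  induction A with
  | zero => simpa using hasVal_zero ζ
  | succ A ih =>
    rw [show (A+1)*d = A*d + d from by ring, Finset.sum_range_add]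
    exact (ih.add (block_zero hd hm hζ A)).congr (by ring)

theorem sum_half (A : ℕ) : HasVal ζ (∑ k ∈ range (A*d + (m+1)), Tk k) 0 := by
  rw [Finset.sum_range_add]
  exact ((sum_blocks hd hm hζ A).add (halfblock_zero hd hm hζ A)).congr (by ring)

theorem perD {x : RatFunc ℚ} (h : HasVal ζ x 0) :
    ∃ f g : Polynomial ℚ, ¬ (Polynomial.cyclotomic d ℚ ∣ g) ∧
      x * algebraMap (Polynomial ℚ) (RatFunc ℚ) g
        = algebraMap (Polynomial ℚ) (RatFunc ℚ) (Polynomial.cyclotomic d ℚ * f) := by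
  obtain ⟨p, w, hw, hxw, hp⟩ := h
  rw [zero_mul] at hp
  have hmin : Polynomial.cyclotomic d ℚ = minpoly ℚ ζ :=
    Polynomial.cyclotomic_eq_minpoly_rat hζ (by omega)
  have hdvd : Polynomial.cyclotomic d ℚ ∣ p := by
    rw [hmin]
    exact minpoly.dvd ℚ ζ hp
  obtain ⟨f, hf⟩ := hdvd
  refine ⟨f, w, ?_, by rw [← hf]; exact hxw⟩
  intro hdw
  obtain ⟨w', hw'⟩ := hdw
  apply hw
  rw [hw', map_mul, hmin, minpoly.aeval, zero_mul]

end Assembly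

theorem mul_denom_eq_num (S : RatFunc ℚ) :
    S * algebraMap (Polynomial ℚ) (RatFunc ℚ) S.denom
      = algebraMap (Polynomial ℚ) (RatFunc ℚ) S.num := by
  nth_rewrite 1 [← RatFunc.num_div_denom S]
  rw [div_mul_cancel₀ _ (RatFunc.algebraMap_ne_zero (RatFunc.denom_ne_zero S))]

theorem glue (N : ℕ) (hN1 : 1 < N) (S : RatFunc ℚ)
    (H : ∀ d, d ∣ N → 1 < d → ∃ f g : Polynomial ℚ,
      ¬ (Polynomial.cyclotomic d ℚ ∣ g) ∧
      S * algebraMap (Polynomial ℚ) (RatFunc ℚ) g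
        = algebraMap (Polynomial ℚ) (RatFunc ℚ) (Polynomial.cyclotomic d ℚ * f)) :
    ∃ f g : Polynomial ℚ, IsRelPrime g (∑ i ∈ range N, (X : Polynomial ℚ)^i) ∧
      S * algebraMap (Polynomial ℚ) (RatFunc ℚ) g
        = algebraMap (Polynomial ℚ) (RatFunc ℚ) ((∑ i ∈ range N, (X : Polynomial ℚ)^i) * f) := by
  have hM : (∑ i ∈ range N, (X : Polynomial ℚ)^i)
      = ∏ d ∈ N.divisors.erase 1, Polynomial.cyclotomic d ℚ :=
    (Polynomial.prod_cyclotomic_eq_geom_sum (by omega) ℚ).symm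
  have hdmem : ∀ d ∈ N.divisors.erase 1, d ∣ N ∧ 1 < d := by
    intro d hdm
    have h1 := Finset.mem_erase.mp hdm
    have h2 := Nat.mem_divisors.mp h1.2
    have hd0 : d ≠ 0 := fun h => by subst h; exact h2.2 (Nat.eq_zero_of_zero_dvd h2.1)
    exact ⟨h2.1, by omega⟩
  have key : ∀ d ∈ N.divisors.erase 1, Polynomial.cyclotomic d ℚ ∣ S.num := by
    intro d hdm
    obtain ⟨hdN, hd1⟩ := hdmem d hdm
    obtain ⟨f, g, hg, hSg⟩ := H d hdN hd1
    have hprime : Prime (Polynomial.cyclotomic d ℚ) :=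
      irreducible_iff_prime.mp (Polynomial.cyclotomic.irreducible_rat (by omega))
    have hpoly : S.num * g = Polynomial.cyclotomic d ℚ * (f * S.denom) := by
      apply RatFunc.algebraMap_injective ℚ
      rw [map_mul, map_mul, map_mul]
      calc algebraMap (Polynomial ℚ) (RatFunc ℚ) S.num * algebraMap (Polynomial ℚ) (RatFunc ℚ) g
          = (S * algebraMap (Polynomial ℚ) (RatFunc ℚ) S.denom) * algebraMap (Polynomial ℚ) (RatFunc ℚ) g := by
            rw [mul_denom_eq_num S]
        _ = (S * algebraMap (Polynomial ℚ) (RatFunc ℚ) g) * algebraMap (Polynomial ℚ) (RatFunc ℚ) S.denom := by ring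
        _ = _ := by rw [hSg, map_mul]; ring
    rcases hprime.dvd_mul.mp ⟨f * S.denom, hpoly⟩ with h | h
    · exact h
    · exact absurd h hg
  have hMdvd : (∑ i ∈ range N, (X : Polynomial ℚ)^i) ∣ S.num := by
    rw [hM]
    apply Finset.prod_dvd_of_coprime
    · intro a ha b hb hab
      exact Polynomial.cyclotomic.isCoprime_rat hab
    · exact key
  obtain ⟨f0, hf0⟩ := hMdvd
  refine ⟨f0, S.denom, ?_, ?_⟩
  · intro c hc hcM
    by_contra hcu
    have hc0 : c ≠ 0 := by
      intro h
      subst h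
      exact (RatFunc.denom_ne_zero S) (zero_dvd_iff.mp hc)
    obtain ⟨π, hπ, hπc⟩ := WfDvdMonoid.exists_irreducible_factor hcu hc0
    have hπM := hπc.trans hcM
    rw [hM] at hπM
    obtain ⟨d, hdm, hπd⟩ := (irreducible_iff_prime.mp hπ).exists_mem_finset_dvd hπM
    obtain ⟨hdN, hd1⟩ := hdmem d hdm
    have hcyc : Irreducible (Polynomial.cyclotomic d ℚ) :=
      Polynomial.cyclotomic.irreducible_rat (by omega)
    have hassoc := hπ.associated_of_dvd hcyc hπd
    have hdn : Polynomial.cyclotomic d ℚ ∣ S.denom :=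
      (hassoc.symm.dvd.trans hπc).trans hc
    exact hcyc.not_isUnit ((RatFunc.isCoprime_num_denom S).isUnit_of_dvd' (key d hdm) hdn)
  · rw [← hf0, mul_denom_eq_num S]

theorem sum_eq_Tsum (K : ℕ) :
    (∑ k ∈ Finset.range K,
        (∑ i ∈ Finset.range (4 * k + 1), (RatFunc.X : RatFunc ℚ) ^ i) *
          (∏ j ∈ Finset.range k, (1 - (RatFunc.X : RatFunc ℚ) ^ (2 * j + 1))) ^ 4 /
          (∏ j ∈ Finset.range k, (1 - (RatFunc.X : RatFunc ℚ) ^ (2 * j + 2))) ^ 4)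
      = ∑ k ∈ range K, Tk k := by
  apply Finset.sum_congr rfl
  intro k _
  simp only [Tk, Bq, Pq, Qq, map_sum, map_prod, map_pow, map_sub, map_one, RatFunc.algebraMap_X]

theorem main_half (N : ℕ) (hN1 : 1 < N) (hNodd : Odd N) (d : ℕ) (hdN : d ∣ N) (hd1 : 1 < d) :
    ∃ f g : Polynomial ℚ, ¬ (Polynomial.cyclotomic d ℚ ∣ g) ∧
      (∑ k ∈ range ((N-1)/2 + 1), Tk k) * algebraMap (Polynomial ℚ) (RatFunc ℚ) g
        = algebraMap (Polynomial ℚ) (RatFunc ℚ) (Polynomial.cyclotomic d ℚ * f) := by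
  have hdodd : Odd d := by
    rcases Nat.even_or_odd d with he | ho
    · exfalso
      obtain ⟨c, hc⟩ := hdN
      exact (Nat.not_odd_iff_even.mpr (he.mul_right c)) (hc ▸ hNodd)
    · exact ho
  obtain ⟨m, hd⟩ := hdodd
  have hm : 0 < m := by omega
  have hζ := Complex.isPrimitiveRoot_exp d (by omega)
  have he : N / d * d = N := Nat.div_mul_cancel hdN
  have heodd : Odd (N / d) := by
    rcases Nat.even_or_odd (N / d) with hev | ho
    · exfalso
      exact (Nat.not_odd_iff_even.mpr (he ▸ hev.mul_right d)) hNodd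
    · exact ho
  obtain ⟨e', he'⟩ := heodd
  have hNval : N = 2*(e'*d + m) + 1 := by
    rw [← he, he', hd]; ring
  have hK : (N-1)/2 + 1 = e'*d + (m+1) := by
    set q := e'*d + m with hq
    omega
  rw [hK]
  exact perD hd hm hζ (sum_half hd hm hζ e')

theorem main_full (N : ℕ) (hN1 : 1 < N) (hNodd : Odd N) (d : ℕ) (hdN : d ∣ N) (hd1 : 1 < d) :
    ∃ f g : Polynomial ℚ, ¬ (Polynomial.cyclotomic d ℚ ∣ g) ∧
      (∑ k ∈ range N, Tk k) * algebraMap (Polynomial ℚ) (RatFunc ℚ) g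
        = algebraMap (Polynomial ℚ) (RatFunc ℚ) (Polynomial.cyclotomic d ℚ * f) := by
  have hdodd : Odd d := by
    rcases Nat.even_or_odd d with he | ho
    · exfalso
      obtain ⟨c, hc⟩ := hdN
      exact (Nat.not_odd_iff_even.mpr (he.mul_right c)) (hc ▸ hNodd)
    · exact ho
  obtain ⟨m, hd⟩ := hdodd
  have hm : 0 < m := by omega
  have hζ := Complex.isPrimitiveRoot_exp d (by omega)
  have he : N / d * d = N := Nat.div_mul_cancel hdN
  rw [← he]
  exact perD hd hm hζ (sum_blocks hd hm hζ (N/d))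

end

/-- Congruence of rational functions in `q` modulo a polynomial `M` ∈ ℚ[q]:
after clearing a denominator `g` having no non-unit common factor with `M`,
the difference is divisible by `M`. -/
def qcongQ (x y : RatFunc ℚ) (M : Polynomial ℚ) : Prop :=
  ∃ f g : Polynomial ℚ, IsRelPrime g M ∧
    (x - y) * algebraMap (Polynomial ℚ) (RatFunc ℚ) g =
      algebraMap (Polynomial ℚ) (RatFunc ℚ) (M * f)

/-- both truncations of the (C.3)-type sum are ≡ 0 (mod [n^r]_q). -/
theorem stmt_17 (n r : ℕ) (hn : 1 < n) (hodd : Odd n) (hr : 1 ≤ r) :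
    qcongQ
      (∑ k ∈ Finset.range ((n ^ r - 1) / 2 + 1),
        (∑ i ∈ Finset.range (4 * k + 1), (RatFunc.X : RatFunc ℚ) ^ i) *
          (∏ j ∈ Finset.range k, (1 - (RatFunc.X : RatFunc ℚ) ^ (2 * j + 1))) ^ 4 /
          (∏ j ∈ Finset.range k, (1 - (RatFunc.X : RatFunc ℚ) ^ (2 * j + 2))) ^ 4)
      0
      (∑ i ∈ Finset.range (n ^ r), Polynomial.X ^ i) ∧
    qcongQ
      (∑ k ∈ Finset.range (n ^ r),
        (∑ i ∈ Finset.range (4 * k + 1), (RatFunc.X : RatFunc ℚ) ^ i) *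
          (∏ j ∈ Finset.range k, (1 - (RatFunc.X : RatFunc ℚ) ^ (2 * j + 1))) ^ 4 /
          (∏ j ∈ Finset.range k, (1 - (RatFunc.X : RatFunc ℚ) ^ (2 * j + 2))) ^ 4)
      0
      (∑ i ∈ Finset.range (n ^ r), Polynomial.X ^ i) := by
  have hN1 : 1 < n ^ r := by
    have h := Nat.le_self_pow (by omega : r ≠ 0) n
    omega
  have hNodd : Odd (n ^ r) := hodd.pow
  constructor
  · unfold qcongQ
    rw [sub_zero, sum_eq_Tsum]
    exact glue (n^r) hN1 _ (fun d hdN hd1 => main_half (n^r) hN1 hNodd d hdN hd1)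
  · unfold qcongQ
    rw [sub_zero, sum_eq_Tsum]
    exact glue (n^r) hN1 _ (fun d hdN hd1 => main_full (n^r) hN1 hNodd d hdN hd1)
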